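/- Euler–Lagrange conditions for the relaxed problem: let h_ε minimize Iᶜ_ε over {h : 0 ≤ h ≤ h̄} and suppose h_ε = h̄ χ_{W_ε} for a measurable set W_ε ⊆ supp(h̄). Define u_ε = (1/ε)(⟨h_ε⟩_x − f) and v_ε = (1/ε)(⟨h_ε⟩_y − g). Then c + u_ε + v_ε ≤ 0 a.e. on W_ε ∩ {h̄ > 0}, and c + u_ε + v_ε ≥ 0 a.e. on (supp(h̄) \ W_ε) ∩ {h̄ > 0}. -/

import Mathlib

open MeasureTheory

lemma bddSuppIntegrable {α : Type*} [MeasurableSpace α] {μ : Measure α}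
    {S : Set α} (hS : MeasurableSet S) (hfin : μ S ≠ ⊤)
    {r : α → ℝ} (hr : AEStronglyMeasurable r μ) {C : ℝ}
    (hb : ∀ a, |r a| ≤ C) (hs : ∀ a ∉ S, r a = 0) : Integrable r μ := by
  have hre : r = S.indicator r := by
    funext a; by_cases h : a ∈ S
    · simp [Set.indicator_of_mem h]
    · simp [Set.indicator_of_notMem h, hs a h]
  rw [hre, integrable_indicator_iff hS]
  exact Measure.integrableOn_of_bounded hfin hr
    (ae_of_all _ fun a => by simpa [Real.norm_eq_abs] using hb a)

lemma margFacts {α β : Type*} [MeasureSpace α] [MeasureSpace β]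
    [SigmaFinite (volume : Measure α)] [SigmaFinite (volume : Measure β)]
    {S : Set α} {T : Set β} (hS : MeasurableSet S) (hT : MeasurableSet T)
    (hSfin : volume S ≠ ⊤) (hTfin : volume T ≠ ⊤)
    {k : α × β → ℝ} (hk : Measurable k) {C : ℝ}
    (hkb : ∀ p, |k p| ≤ C) (hks : ∀ p, p ∉ S ×ˢ T → k p = 0) :
    (∀ x, Integrable (fun y => k (x, y))) ∧
    Measurable (fun x => ∫ y, k (x, y)) ∧
    (∀ x, |∫ y, k (x, y)| ≤ C * (volume T).toReal) ∧
    (∀ x, x ∉ S → (∫ y, k (x, y)) = 0) ∧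
    Integrable (fun x => ∫ y, k (x, y)) := by
  have hslice : ∀ x, Integrable (fun y => k (x, y)) := by
    intro x
    refine bddSuppIntegrable hT hTfin
      ((hk.comp (measurable_prodMk_left (x := x))).aestronglyMeasurable)
      (fun y => hkb (x, y)) (fun y hy => hks (x, y) (by simp [hy]))
  have hmeas : Measurable (fun x => ∫ y, k (x, y)) :=
    hk.stronglyMeasurable.integral_prod_right'.measurable
  have hsupp : ∀ x, x ∉ S → (∫ y, k (x, y)) = 0 := by
    intro x hx
    have : ∀ y, k (x, y) = 0 := fun y => hks (x, y) (by simp [hx])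
    simp [this]
  have hbound : ∀ x, |∫ y, k (x, y)| ≤ C * (volume T).toReal := by
    intro x
    have h1 : |∫ y, k (x, y)| ≤ ∫ y, |k (x, y)| := by
      simpa [Real.norm_eq_abs] using
        norm_integral_le_integral_norm (fun y => k (x, y))
    have hindint : Integrable (T.indicator fun _ : β => C) :=
      (integrable_indicator_iff hT).2 (integrableOn_const hTfin)
    have h2 : ∫ y, |k (x, y)| ≤ ∫ y, T.indicator (fun _ => C) y := by
      refine integral_mono (hslice x).abs hindint ?_
      intro y
      by_cases hy : y ∈ T
      · simpa [Set.indicator_of_mem hy] using hkb (x, y)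
      · simp [Set.indicator_of_notMem hy, hks (x, y) (by simp [hy])]
    have h3 : ∫ y, T.indicator (fun _ => C) y = (volume T).toReal * C := by
      simpa [measureReal_def] using integral_indicator_const (C) hT
    calc |∫ y, k (x, y)| ≤ ∫ y, |k (x, y)| := h1
      _ ≤ ∫ y, T.indicator (fun _ => C) y := h2
      _ = C * (volume T).toReal := by rw [h3]; ring
  exact ⟨hslice, hmeas, hbound, hsupp,
    bddSuppIntegrable hS hSfin hmeas.aestronglyMeasurable hbound hsupp⟩


lemma fubFacts {α β : Type*} [MeasureSpace α] [MeasureSpace β]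
    [SigmaFinite (volume : Measure α)] [SigmaFinite (volume : Measure β)]
    {S : Set α} {T : Set β} (hS : MeasurableSet S) (hT : MeasurableSet T)
    (hSfin : volume S ≠ ⊤) (hTfin : volume T ≠ ⊤)
    {k : α × β → ℝ} (hk : Measurable k) {C : ℝ}
    (hkb : ∀ p, |k p| ≤ C) (hks : ∀ p, p ∉ S ×ˢ T → k p = 0)
    {u : α → ℝ} (hu : Integrable u) (hum : Measurable u) :
    Integrable (fun p : α × β => u p.1 * k p) ∧
    (∫ p : α × β, u p.1 * k p) = ∫ x, u x * ∫ y, k (x, y) := by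
  obtain ⟨hslice, hmeas, hbound, hsupp, hint⟩ := margFacts hS hT hSfin hTfin hk hkb hks
  have hkabs : Measurable fun p : α × β => |k p| := hk.norm
  have habs : ∀ p : α × β, |(|k p|)| ≤ C := by
    intro p; rw [abs_abs]; exact hkb p
  obtain ⟨hslice', hmeas', hbound', hsupp', hint'⟩ :=
    margFacts hS hT hSfin hTfin hkabs habs (fun p hp => by simp [hks p hp])
  have hfm : AEStronglyMeasurable (fun p : α × β => u p.1 * k p)
      ((volume : Measure α).prod (volume : Measure β)) := by
    rw [← Measure.volume_eq_prod α β]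
    exact ((hum.comp measurable_fst).mul hk).aestronglyMeasurable
  have hintp : Integrable (fun p : α × β => u p.1 * k p)
      ((volume : Measure α).prod (volume : Measure β)) := by
    rw [integrable_prod_iff hfm]
    constructor
    · exact ae_of_all _ fun x => (hslice x).const_mul (u x)
    · have heq : (fun x => ∫ y, ‖u x * k (x, y)‖) =
          fun x => |u x| * ∫ y, |k (x, y)| := by
        funext x
        rw [← integral_const_mul]
        congr 1; funext y; rw [Real.norm_eq_abs, abs_mul]
      rw [heq]
      have := (hu.abs.bdd_mul hmeas'.aestronglyMeasurable (c := C * (volume T).toReal)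
        (ae_of_all _ fun x => by
          simpa [Real.norm_eq_abs] using hbound' x))
      exact this.congr (ae_of_all _ fun x => by ring)
  have hintv : Integrable (fun p : α × β => u p.1 * k p) := by
    rw [Measure.volume_eq_prod α β]; exact hintp
  refine ⟨hintv, ?_⟩
  rw [Measure.volume_eq_prod α β, integral_prod _ hintp]
  congr 1; funext x
  simp only []
  rw [show (fun y => u (x, y).1 * k (x, y)) = fun y => u x * k (x, y) from rfl, integral_const_mul]

lemma sqInt {α : Type*} [MeasureSpace α] {S : Set α} (hS : MeasurableSet S)
    (hfin : volume S ≠ ⊤) {w : α → ℝ} (hm : Measurable w) {D : ℝ}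
    (hb : ∀ a, |w a| ≤ D) (hz : ∀ a, a ∉ S → w a = 0) :
    Integrable (fun a => w a ^ 2) := by
  refine bddSuppIntegrable hS hfin (hm.pow_const 2).aestronglyMeasurable
    (C := D ^ 2) (fun a => ?_) (fun a ha => by rw [hz a ha]; ring)
  rw [abs_pow]
  exact pow_le_pow_left₀ (abs_nonneg _) (hb a) 2


/-- The relaxed (penalized) transport cost
`Iᶜ_ε(h) = ∬ c h + (1/(2ε))‖⟨h⟩ₓ − f‖²_{L²} + (1/(2ε))‖⟨h⟩_y − g‖²_{L²}`. -/
noncomputable def relaxedCost (m n : ℕ) (ε : ℝ)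
    (c : (Fin m → ℝ) × (Fin n → ℝ) → ℝ)
    (f : (Fin m → ℝ) → ℝ) (g : (Fin n → ℝ) → ℝ)
    (h : (Fin m → ℝ) × (Fin n → ℝ) → ℝ) : ℝ :=
  (∫ p, c p * h p)
    + (1 / (2 * ε)) * (∫ x, ((∫ y, h (x, y)) - f x) ^ 2)
    + (1 / (2 * ε)) * (∫ y, ((∫ x, h (x, y)) - g y) ^ 2)

set_option maxHeartbeats 3200000 in
/-- Euler–Lagrange conditions for the relaxed problem: if
`h_ε = h̄ χ_{W_ε}` minimizes `Iᶜ_ε` over `{h : 0 ≤ h ≤ h̄}`, and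
`u_ε = (1/ε)(⟨h_ε⟩ₓ − f)`, `v_ε = (1/ε)(⟨h_ε⟩_y − g)`, then
`c + u_ε + v_ε ≤ 0` a.e. on `W_ε ∩ {h̄ > 0}` and `c + u_ε + v_ε ≥ 0` a.e. on
`(supp h̄ \ W_ε) ∩ {h̄ > 0}`. -/
theorem relaxed_euler_lagrange (m n : ℕ) (ε : ℝ) (hε : 0 < ε)
    (hbar c : (Fin m → ℝ) × (Fin n → ℝ) → ℝ)
    (f : (Fin m → ℝ) → ℝ) (g : (Fin n → ℝ) → ℝ)
    (hbar_meas : Measurable hbar) (hbar_nonneg : ∀ p, 0 ≤ hbar p)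
    (hbar_bdd : ∃ C, ∀ p, hbar p ≤ C) (hbar_supp : HasCompactSupport hbar)
    (f_meas : Measurable f) (f_nonneg : ∀ x, 0 ≤ f x)
    (f_int : Integrable f) (f_mass : ∫ x, f x = 1)
    (f_sq_int : Integrable (fun x => (f x) ^ 2))
    (g_meas : Measurable g) (g_nonneg : ∀ y, 0 ≤ g y)
    (g_int : Integrable g) (g_mass : ∫ y, g y = 1)
    (g_sq_int : Integrable (fun y => (g y) ^ 2))
    (c_locint : LocallyIntegrable c)
    (Wε : Set ((Fin m → ℝ) × (Fin n → ℝ))) (Wε_meas : MeasurableSet Wε)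
    (Wε_sub : Wε ⊆ tsupport hbar)
    (hε : (Fin m → ℝ) × (Fin n → ℝ) → ℝ)
    (hε_def : hε = Wε.indicator hbar)
    (hε_min : ∀ h : (Fin m → ℝ) × (Fin n → ℝ) → ℝ, Measurable h →
      (∀ᵐ p, 0 ≤ h p ∧ h p ≤ hbar p) →
      relaxedCost m n ε c f g hε ≤ relaxedCost m n ε c f g h)
    (uε : (Fin m → ℝ) → ℝ) (vε : (Fin n → ℝ) → ℝ)
    (uε_def : ∀ x, uε x = (1 / ε) * ((∫ y, hε (x, y)) - f x))
    (vε_def : ∀ y, vε y = (1 / ε) * ((∫ x, hε (x, y)) - g y)) :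
    (∀ᵐ p : (Fin m → ℝ) × (Fin n → ℝ),
        p ∈ Wε → 0 < hbar p → c p + uε p.1 + vε p.2 ≤ 0) ∧
      (∀ᵐ p : (Fin m → ℝ) × (Fin n → ℝ),
        p ∈ tsupport hbar \ Wε → 0 < hbar p → 0 ≤ c p + uε p.1 + vε p.2) := by
  have εpos : 0 < ε := ‹0 < ε›
  obtain ⟨C, hC⟩ := hbar_bdd
  have hC0 : 0 ≤ C := le_trans (hbar_nonneg default) (hC default)
  set K₁ : Set (Fin m → ℝ) := Prod.fst '' tsupport hbar with hK₁
  set K₂ : Set (Fin n → ℝ) := Prod.snd '' tsupport hbar with hK₂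
  have hK1c : IsCompact K₁ := hbar_supp.image continuous_fst
  have hK2c : IsCompact K₂ := hbar_supp.image continuous_snd
  have hK1m : MeasurableSet K₁ := hK1c.isClosed.measurableSet
  have hK2m : MeasurableSet K₂ := hK2c.isClosed.measurableSet
  have hK1fin : volume K₁ ≠ ⊤ := hK1c.measure_lt_top.ne
  have hK2fin : volume K₂ ≠ ⊤ := hK2c.measure_lt_top.ne
  have hbar_zero : ∀ p, p ∉ K₁ ×ˢ K₂ → hbar p = 0 := by
    intro p hp
    by_contra hne
    exact hp ⟨Set.mem_image_of_mem _ (subset_tsupport hbar (by simpa using hne)),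
      Set.mem_image_of_mem _ (subset_tsupport hbar (by simpa using hne))⟩
  have hε_meas : Measurable hε := hε_def ▸ hbar_meas.indicator Wε_meas
  have hε_nonneg : ∀ p, 0 ≤ hε p := by
    intro p; rw [hε_def]; exact Set.indicator_nonneg (fun q _ => hbar_nonneg q) p
  have hε_le : ∀ p, hε p ≤ hbar p := by
    intro p; rw [hε_def]; exact Set.indicator_le_self' (fun q _ => hbar_nonneg q) p
  have hε_bd : ∀ p, |hε p| ≤ C := fun p =>
    abs_le.2 ⟨by linarith [hε_nonneg p], le_trans (hε_le p) (hC p)⟩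
  have hbar_bd : ∀ p, |hbar p| ≤ C := fun p =>
    abs_le.2 ⟨by linarith [hbar_nonneg p], hC p⟩
  have hε_zero : ∀ p, p ∉ K₁ ×ˢ K₂ → hε p = 0 := by
    intro p hp; have := hbar_zero p hp
    have h1 := hε_nonneg p; have h2 := hε_le p; linarith
  obtain ⟨hεsli, hεmargm, hεmargb, hεmargs, hεmargi⟩ :=
    margFacts hK1m hK2m hK1fin hK2fin hε_meas hε_bd hε_zero
  -- swapped version for hε
  have hεswm : Measurable (fun q : (Fin n → ℝ) × (Fin m → ℝ) => hε q.swap) :=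
    hε_meas.comp measurable_swap
  have hεsw_bd : ∀ q : (Fin n → ℝ) × (Fin m → ℝ), |hε q.swap| ≤ C := fun q => hε_bd _
  have hεsw_zero : ∀ q : (Fin n → ℝ) × (Fin m → ℝ), q ∉ K₂ ×ˢ K₁ → hε q.swap = 0 := by
    intro q hq; exact hε_zero _ (fun hmem => hq ⟨hmem.2, hmem.1⟩)
  obtain ⟨hεsli', hεmargm', hεmargb', hεmargs', hεmargi'⟩ :=
    margFacts hK2m hK1m hK2fin hK1fin hεswm hεsw_bd hεsw_zero
  have uε_eq : uε = fun x => (1 / ε) * ((∫ y, hε (x, y)) - f x) := funext uε_def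
  have vε_eq : vε = fun y => (1 / ε) * ((∫ x, hε (x, y)) - g y) := funext vε_def
  have uεm : Measurable uε := by
    rw [uε_eq]; exact (hεmargm.sub f_meas).const_mul _
  have uεi : Integrable uε := by
    rw [uε_eq]; exact (hεmargi.sub f_int).const_mul _
  have vεm : Measurable vε := by
    rw [vε_eq]; exact (hεmargm'.sub g_meas).const_mul _
  have vεi : Integrable vε := by
    rw [vε_eq]; exact (hεmargi'.sub g_int).const_mul _
  have hK'm : MeasurableSet (K₁ ×ˢ K₂) := hK1m.prod hK2m
  have c_int_on : IntegrableOn c (K₁ ×ˢ K₂) :=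
    c_locint.integrableOn_isCompact (hK1c.prod hK2c)
  -- the key variational inequality
  have key : ∀ V : Set ((Fin m → ℝ) × (Fin n → ℝ)), MeasurableSet V →
      Integrable (fun p => (c p + uε p.1 + vε p.2) * (V.indicator hbar p - hε p)) ∧
      0 ≤ ∫ p, (c p + uε p.1 + vε p.2) * (V.indicator hbar p - hε p) := by
    intro V hV
    set h : (Fin m → ℝ) × (Fin n → ℝ) → ℝ := V.indicator hbar with hh
    set k : (Fin m → ℝ) × (Fin n → ℝ) → ℝ := fun p => h p - hε p with hkdef
    have h_meas : Measurable h := hbar_meas.indicator hV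
    have h_nonneg : ∀ p, 0 ≤ h p := fun p =>
      Set.indicator_nonneg (fun q _ => hbar_nonneg q) p
    have h_le : ∀ p, h p ≤ hbar p := fun p =>
      Set.indicator_le_self' (fun q _ => hbar_nonneg q) p
    have k_meas : Measurable k := h_meas.sub hε_meas
    have k_bd : ∀ p, |k p| ≤ C := by
      intro p
      have := h_nonneg p; have := h_le p; have := hε_nonneg p; have := hε_le p
      have := hC p
      exact abs_le.2 ⟨by simp only [hkdef]; linarith, by simp only [hkdef]; linarith⟩
    have k_zero : ∀ p, p ∉ K₁ ×ˢ K₂ → k p = 0 := by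
      intro p hp
      have hb := hbar_zero p hp
      have h1 := h_nonneg p; have h2 := h_le p
      have h3 := hε_zero p hp
      simp only [hkdef]; rw [h3]; linarith
    obtain ⟨ksli, kmargm, kmargb, kmargs, kmargi⟩ :=
      margFacts hK1m hK2m hK1fin hK2fin k_meas k_bd k_zero
    have kswm : Measurable (fun q : (Fin n → ℝ) × (Fin m → ℝ) => k q.swap) :=
      k_meas.comp measurable_swap
    have ksw_bd : ∀ q : (Fin n → ℝ) × (Fin m → ℝ), |k q.swap| ≤ C := fun q => k_bd _
    have ksw_zero : ∀ q : (Fin n → ℝ) × (Fin m → ℝ), q ∉ K₂ ×ˢ K₁ → k q.swap = 0 := by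
      intro q hq; exact k_zero _ (fun hmem => hq ⟨hmem.2, hmem.1⟩)
    obtain ⟨ksli', kmargm', kmargb', kmargs', kmargi'⟩ :=
      margFacts hK2m hK1m hK2fin hK1fin kswm ksw_bd ksw_zero
    obtain ⟨iuk, euk⟩ :=
      fubFacts hK1m hK2m hK1fin hK2fin k_meas k_bd k_zero uεi uεm
    obtain ⟨ivk', evk'⟩ :=
      fubFacts hK2m hK1m hK2fin hK1fin kswm ksw_bd ksw_zero vεi vεm
    have ivk : Integrable (fun p : (Fin m → ℝ) × (Fin n → ℝ) => vε p.2 * k p) := by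
      rw [Measure.volume_eq_prod]
      have h1 : Integrable (fun q : (Fin n → ℝ) × (Fin m → ℝ) => vε q.1 * k q.swap)
          ((volume : Measure (Fin n → ℝ)).prod (volume : Measure (Fin m → ℝ))) := by
        rw [← Measure.volume_eq_prod]; exact ivk'
      exact h1.swap
    have evk : (∫ p : (Fin m → ℝ) × (Fin n → ℝ), vε p.2 * k p)
        = ∫ y, vε y * ∫ x, k (x, y) := by
      rw [Measure.volume_eq_prod,
        ← integral_prod_swap (fun p : (Fin m → ℝ) × (Fin n → ℝ) => vε p.2 * k p),
        ← Measure.volume_eq_prod]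
      exact evk'
    -- integrability of c-terms
    have mul_ind : ∀ r : (Fin m → ℝ) × (Fin n → ℝ) → ℝ, Measurable r →
        (∀ p, |r p| ≤ C) → (∀ p, p ∉ K₁ ×ˢ K₂ → r p = 0) →
        Integrable (fun p => c p * r p) := by
      intro r hrm hrb hrz
      have h1 : IntegrableOn (fun p => r p * c p) (K₁ ×ˢ K₂) :=
        c_int_on.bdd_mul hrm.aestronglyMeasurable.restrict (c := C)
          (ae_of_all _ fun p => by simpa [Real.norm_eq_abs] using hrb p)
      have h2 : (fun p => c p * r p) = (K₁ ×ˢ K₂).indicator (fun p => r p * c p) := by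
        funext p
        by_cases hp : p ∈ K₁ ×ˢ K₂
        · simp [Set.indicator_of_mem hp, mul_comm]
        · simp [Set.indicator_of_notMem hp, hrz p hp]
      rw [h2]
      exact (integrable_indicator_iff hK'm).2 h1
    have i_ck : Integrable (fun p => c p * k p) := mul_ind k k_meas k_bd k_zero
    have i_ch : Integrable (fun p => c p * hε p) := mul_ind hε hε_meas hε_bd hε_zero
    -- clean versions of swapped marginal facts
    have hεsli2 : ∀ y, Integrable fun x => hε (x, y) := fun y => hεsli' y
    have hεmargm2 : Measurable (fun y => ∫ x, hε (x, y)) := hεmargm'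
    have hεmargb2 : ∀ y, |∫ x, hε (x, y)| ≤ C * (volume K₁).toReal := fun y => hεmargb' y
    have hεmargs2 : ∀ y, y ∉ K₂ → (∫ x, hε (x, y)) = 0 := fun y hy => hεmargs' y hy
    have hεmargi2 : Integrable (fun y => ∫ x, hε (x, y)) := hεmargi'
    have ksli2 : ∀ y, Integrable fun x => k (x, y) := fun y => ksli' y
    have kmargm2 : Measurable (fun y => ∫ x, k (x, y)) := kmargm'
    have kmargb2 : ∀ y, |∫ x, k (x, y)| ≤ C * (volume K₁).toReal := fun y => kmargb' y
    have kmargs2 : ∀ y, y ∉ K₂ → (∫ x, k (x, y)) = 0 := fun y hy => kmargs' y hy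
    have kmargi2 : Integrable (fun y => ∫ x, k (x, y)) := kmargi'
    -- x-side square integrabilities
    have im2 : Integrable (fun x => (∫ y, hε (x, y)) ^ 2) :=
      sqInt hK1m hK1fin hεmargm hεmargb hεmargs
    have imf : Integrable (fun x => (∫ y, hε (x, y)) * f x) :=
      f_int.bdd_mul hεmargm.aestronglyMeasurable (c := C * (volume K₂).toReal)
        (ae_of_all _ fun x => by simpa [Real.norm_eq_abs] using hεmargb x)
    have iA2 : Integrable (fun x => ((∫ y, hε (x, y)) - f x) ^ 2) := by
      have hfe : (fun x => ((∫ y, hε (x, y)) - f x) ^ 2)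
          = fun x => (∫ y, hε (x, y)) ^ 2 - 2 * ((∫ y, hε (x, y)) * f x) + f x ^ 2 :=
        funext fun x => by ring
      rw [hfe]; exact (im2.sub (imf.const_mul 2)).add f_sq_int
    have iB2 : Integrable (fun x => (∫ y, k (x, y)) ^ 2) :=
      sqInt hK1m hK1fin kmargm kmargb kmargs
    have iAB : Integrable (fun x => ((∫ y, hε (x, y)) - f x) * (∫ y, k (x, y))) := by
      have := (hεmargi.sub f_int).bdd_mul kmargm.aestronglyMeasurable (c := C * (volume K₂).toReal)
        (ae_of_all _ fun x => by simpa [Real.norm_eq_abs] using kmargb x)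
      exact this.congr (ae_of_all _ fun x => mul_comm _ _)
    -- y-side square integrabilities
    have im2' : Integrable (fun y => (∫ x, hε (x, y)) ^ 2) :=
      sqInt hK2m hK2fin hεmargm2 hεmargb2 hεmargs2
    have img : Integrable (fun y => (∫ x, hε (x, y)) * g y) :=
      g_int.bdd_mul hεmargm2.aestronglyMeasurable (c := C * (volume K₁).toReal)
        (ae_of_all _ fun y => by simpa [Real.norm_eq_abs] using hεmargb2 y)
    have iA2' : Integrable (fun y => ((∫ x, hε (x, y)) - g y) ^ 2) := by
      have hfe : (fun y => ((∫ x, hε (x, y)) - g y) ^ 2)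
          = fun y => (∫ x, hε (x, y)) ^ 2 - 2 * ((∫ x, hε (x, y)) * g y) + g y ^ 2 :=
        funext fun y => by ring
      rw [hfe]; exact (im2'.sub (img.const_mul 2)).add g_sq_int
    have iB2' : Integrable (fun y => (∫ x, k (x, y)) ^ 2) :=
      sqInt hK2m hK2fin kmargm2 kmargb2 kmargs2
    have iAB' : Integrable (fun y => ((∫ x, hε (x, y)) - g y) * (∫ x, k (x, y))) := by
      have := (hεmargi2.sub g_int).bdd_mul kmargm2.aestronglyMeasurable (c := C * (volume K₁).toReal)
        (ae_of_all _ fun y => by simpa [Real.norm_eq_abs] using kmargb2 y)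
      exact this.congr (ae_of_all _ fun y => mul_comm _ _)
    -- abbreviations
    set b₁ : ℝ := ∫ x, ((∫ y, hε (x, y)) - f x) * (∫ y, k (x, y)) with hb₁
    set b₂ : ℝ := ∫ y, ((∫ x, hε (x, y)) - g y) * (∫ x, k (x, y)) with hb₂
    set q₁ : ℝ := ∫ x, (∫ y, k (x, y)) ^ 2 with hq₁
    set q₂ : ℝ := ∫ y, (∫ x, k (x, y)) ^ 2 with hq₂
    set L : ℝ := (∫ p, c p * k p) + (1 / ε) * b₁ + (1 / ε) * b₂ with hLdef
    set Q : ℝ := (1 / (2 * ε)) * (q₁ + q₂) with hQdef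
    -- cost of hε
    have cost0 : relaxedCost m n ε c f g hε = (∫ p, c p * hε p)
        + (1 / (2 * ε)) * (∫ x, ((∫ y, hε (x, y)) - f x) ^ 2)
        + (1 / (2 * ε)) * (∫ y, ((∫ x, hε (x, y)) - g y) ^ 2) := rfl
    -- cost of perturbation
    have cost_t : ∀ t : ℝ, relaxedCost m n ε c f g (fun p => hε p + t * k p)
        = relaxedCost m n ε c f g hε + t * L + t ^ 2 * Q := by
      intro t
      have hshow : relaxedCost m n ε c f g (fun p => hε p + t * k p)
          = (∫ p, c p * (hε p + t * k p))
            + (1 / (2 * ε)) * (∫ x, ((∫ y, hε (x, y) + t * k (x, y)) - f x) ^ 2)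
            + (1 / (2 * ε)) * (∫ y, ((∫ x, hε (x, y) + t * k (x, y)) - g y) ^ 2) := rfl
      have e1 : (∫ p, c p * (hε p + t * k p))
          = (∫ p, c p * hε p) + t * (∫ p, c p * k p) := by
        rw [show (fun p => c p * (hε p + t * k p))
            = fun p => c p * hε p + t * (c p * k p) from funext fun p => by ring]
        rw [integral_add i_ch (i_ck.const_mul t), integral_const_mul]
      have inner1 : ∀ x, (∫ y, hε (x, y) + t * k (x, y))
          = (∫ y, hε (x, y)) + t * (∫ y, k (x, y)) := by
        intro x
        rw [integral_add (hεsli x) ((ksli x).const_mul t), integral_const_mul]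
      have inner2 : ∀ y, (∫ x, hε (x, y) + t * k (x, y))
          = (∫ x, hε (x, y)) + t * (∫ x, k (x, y)) := by
        intro y
        rw [integral_add (hεsli2 y) ((ksli2 y).const_mul t), integral_const_mul]
      have e2 : (∫ x, ((∫ y, hε (x, y) + t * k (x, y)) - f x) ^ 2)
          = (∫ x, ((∫ y, hε (x, y)) - f x) ^ 2) + (t * (2 * b₁) + t ^ 2 * q₁) := by
        have hfun : (fun x => ((∫ y, hε (x, y) + t * k (x, y)) - f x) ^ 2)
            = fun x => ((∫ y, hε (x, y)) - f x) ^ 2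
              + (t * (2 * (((∫ y, hε (x, y)) - f x) * (∫ y, k (x, y))))
                 + t ^ 2 * ((∫ y, k (x, y)) ^ 2)) := by
          funext x; rw [inner1 x]; ring
        have hXY : Integrable (fun x =>
            t * (2 * (((∫ y, hε (x, y)) - f x) * (∫ y, k (x, y))))
              + t ^ 2 * ((∫ y, k (x, y)) ^ 2)) :=
          ((iAB.const_mul 2).const_mul t).add (iB2.const_mul (t ^ 2))
        have hX : Integrable (fun x =>
            t * (2 * (((∫ y, hε (x, y)) - f x) * (∫ y, k (x, y))))) :=
          (iAB.const_mul 2).const_mul t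
        have hY : Integrable (fun x => t ^ 2 * ((∫ y, k (x, y)) ^ 2)) :=
          iB2.const_mul (t ^ 2)
        rw [hfun, integral_add iA2 hXY, integral_add hX hY,
          integral_const_mul, integral_const_mul, integral_const_mul]
      have e3 : (∫ y, ((∫ x, hε (x, y) + t * k (x, y)) - g y) ^ 2)
          = (∫ y, ((∫ x, hε (x, y)) - g y) ^ 2) + (t * (2 * b₂) + t ^ 2 * q₂) := by
        have hfun : (fun y => ((∫ x, hε (x, y) + t * k (x, y)) - g y) ^ 2)
            = fun y => ((∫ x, hε (x, y)) - g y) ^ 2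
              + (t * (2 * (((∫ x, hε (x, y)) - g y) * (∫ x, k (x, y))))
                 + t ^ 2 * ((∫ x, k (x, y)) ^ 2)) := by
          funext y; rw [inner2 y]; ring
        have hXY : Integrable (fun y =>
            t * (2 * (((∫ x, hε (x, y)) - g y) * (∫ x, k (x, y))))
              + t ^ 2 * ((∫ x, k (x, y)) ^ 2)) :=
          ((iAB'.const_mul 2).const_mul t).add (iB2'.const_mul (t ^ 2))
        have hX : Integrable (fun y =>
            t * (2 * (((∫ x, hε (x, y)) - g y) * (∫ x, k (x, y))))) :=
          (iAB'.const_mul 2).const_mul t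
        have hY : Integrable (fun y => t ^ 2 * ((∫ x, k (x, y)) ^ 2)) :=
          iB2'.const_mul (t ^ 2)
        rw [hfun, integral_add iA2' hXY, integral_add hX hY,
          integral_const_mul, integral_const_mul, integral_const_mul]
      have hεne : ε ≠ 0 := ne_of_gt εpos
      rw [hshow, e1, e2, e3, cost0, hLdef, hQdef]
      field_simp
      ring
    -- nonnegativity of Q
    have hq1 : 0 ≤ q₁ := by rw [hq₁]; exact integral_nonneg fun x => sq_nonneg _
    have hq2 : 0 ≤ q₂ := by rw [hq₂]; exact integral_nonneg fun y => sq_nonneg _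
    have hQnn : 0 ≤ Q := by
      rw [hQdef]
      have : (0:ℝ) < 2 * ε := by linarith
      positivity
    -- variational inequality in t
    have htineq : ∀ t : ℝ, 0 < t → t ≤ 1 → 0 ≤ t * L + t ^ 2 * Q := by
      intro t ht0 ht1
      have hmeas_t : Measurable fun p => hε p + t * k p :=
        hε_meas.add (k_meas.const_mul t)
      have hconstr : ∀ᵐ p, 0 ≤ hε p + t * k p ∧ hε p + t * k p ≤ hbar p := by
        refine ae_of_all _ fun p => ?_
        have h1 := hε_nonneg p; have h2 := hε_le p
        have h3 := h_nonneg p; have h4 := h_le p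
        have hk : k p = h p - hε p := by rw [hkdef]
        rw [hk]
        constructor
        · nlinarith [mul_nonneg (sub_nonneg.2 ht1) h1, mul_nonneg ht0.le h3]
        · nlinarith [mul_le_mul_of_nonneg_left h2 (sub_nonneg.2 ht1),
            mul_le_mul_of_nonneg_left h4 ht0.le]
      have hmin := hε_min _ hmeas_t hconstr
      rw [cost_t t] at hmin
      linarith [hmin]
    -- deduce 0 ≤ L
    have hL : 0 ≤ L := by
      by_contra hLneg
      push_neg at hLneg
      have hQ1 : (0:ℝ) < Q + 1 := by linarith
      set t : ℝ := min 1 (-L / (Q + 1)) with htdef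
      have ht0 : 0 < t := lt_min one_pos (div_pos (by linarith) hQ1)
      have ht1 : t ≤ 1 := min_le_left _ _
      have ht2 : t * (Q + 1) ≤ -L := by
        have h := min_le_right 1 (-L / (Q + 1))
        rw [le_div_iff₀ hQ1] at h
        exact h
      have h0 := htineq t ht0 ht1
      nlinarith
    -- identify L with the target integral
    have hsplit : (fun p => (c p + uε p.1 + vε p.2) * (h p - hε p))
        = fun p => c p * k p + (uε p.1 * k p + vε p.2 * k p) := by
      funext p
      have hk : k p = h p - hε p := by rw [hkdef]
      rw [hk]; ring
    have iphi : Integrable (fun p => (c p + uε p.1 + vε p.2) * (h p - hε p)) := by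
      rw [hsplit]; exact i_ck.add (iuk.add ivk)
    refine ⟨iphi, ?_⟩
    have eu2 : (∫ x, uε x * ∫ y, k (x, y)) = (1 / ε) * b₁ := by
      have : (fun x => uε x * ∫ y, k (x, y))
          = fun x => (1 / ε) * (((∫ y, hε (x, y)) - f x) * (∫ y, k (x, y))) := by
        funext x; rw [uε_def x]; ring
      rw [this, integral_const_mul, hb₁]
    have ev2 : (∫ y, vε y * ∫ x, k (x, y)) = (1 / ε) * b₂ := by
      have : (fun y => vε y * ∫ x, k (x, y))
          = fun y => (1 / ε) * (((∫ x, hε (x, y)) - g y) * (∫ x, k (x, y))) := by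
        funext y; rw [vε_def y]; ring
      rw [this, integral_const_mul, hb₂]
    have eInt : (∫ p, (c p + uε p.1 + vε p.2) * (h p - hε p))
        = (∫ p, c p * k p) + ((1 / ε) * b₁ + (1 / ε) * b₂) := by
      have iuvk : Integrable (fun p => uε p.1 * k p + vε p.2 * k p) := iuk.add ivk
      rw [hsplit, integral_add i_ck iuvk, integral_add iuk ivk,
        euk, evk, eu2, ev2]
    rw [eInt]
    rw [hLdef] at hL
    linarith
  -- measurable version of c
  have cmk : AEStronglyMeasurable c volume := c_locint.aestronglyMeasurable
  set c' : (Fin m → ℝ) × (Fin n → ℝ) → ℝ := cmk.mk c with hc'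
  have c'meas : Measurable c' := cmk.stronglyMeasurable_mk.measurable
  have hcc' : c =ᵐ[volume] c' := cmk.ae_eq_mk
  have φ'meas : Measurable fun p : (Fin m → ℝ) × (Fin n → ℝ) =>
      c' p + uε p.1 + vε p.2 :=
    (c'meas.add (uεm.comp measurable_fst)).add (vεm.comp measurable_snd)
  -- the nullity engine
  have nullOf : ∀ (A : Set ((Fin m → ℝ) × (Fin n → ℝ)))
      (F G : (Fin m → ℝ) × (Fin n → ℝ) → ℝ), (∀ p, 0 ≤ F p) → F =ᵐ[volume] G →
      Integrable G → (∫ p, G p) ≤ 0 → (∀ p ∈ A, F p ≠ 0) → volume A = 0 := by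
    intro A F G hF0 hFG hGint hGle hA
    have hFint : Integrable F := hGint.congr hFG.symm
    have hFle : (∫ p, F p) ≤ 0 := by rw [integral_congr_ae hFG]; exact hGle
    have h0 : (∫ p, F p) = 0 := le_antisymm hFle (integral_nonneg hF0)
    have hzero : F =ᵐ[volume] 0 := (integral_eq_zero_iff_of_nonneg hF0 hFint).1 h0
    refine measure_mono_null (fun p hp => hA p hp) (ae_iff.1 hzero)
  -- first conclusion
  set A1 : Set ((Fin m → ℝ) × (Fin n → ℝ)) :=
    (Wε ∩ {p | 0 < hbar p}) ∩ {p | 0 < c' p + uε p.1 + vε p.2} with hA1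
  have hA1m : MeasurableSet A1 :=
    (Wε_meas.inter (measurableSet_lt measurable_const hbar_meas)).inter
      (measurableSet_lt measurable_const φ'meas)
  obtain ⟨iG1, hG1⟩ := key (Wε \ A1) (Wε_meas.diff hA1m)
  have hk1 : ∀ p, (Wε \ A1).indicator hbar p - hε p = -A1.indicator hbar p := by
    intro p; rw [hε_def]
    by_cases hpA : p ∈ A1
    · have hpW : p ∈ Wε := hpA.1.1
      simp [Set.indicator_apply, Set.mem_diff, hpA, hpW]
    · by_cases hpW : p ∈ Wε <;>
        simp [Set.indicator_apply, Set.mem_diff, hpA, hpW]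
  have hnull1 : volume A1 = 0 := by
    refine nullOf A1
      (A1.indicator (fun p => (c' p + uε p.1 + vε p.2) * hbar p))
      (fun p => -((c p + uε p.1 + vε p.2) * ((Wε \ A1).indicator hbar p - hε p)))
      ?_ ?_ iG1.neg ?_ ?_
    · intro p
      by_cases hpA : p ∈ A1
      · rw [Set.indicator_of_mem hpA]
        exact mul_nonneg (le_of_lt hpA.2) (hbar_nonneg p)
      · simp [Set.indicator_of_notMem hpA]
    · filter_upwards [hcc'] with p hcp
      rw [hk1 p]
      by_cases hpA : p ∈ A1
      · rw [Set.indicator_of_mem hpA, Set.indicator_of_mem hpA, hcp]; ring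
      · rw [Set.indicator_of_notMem hpA, Set.indicator_of_notMem hpA]; ring
    · rw [integral_neg]; linarith [hG1]
    · intro p hp
      rw [Set.indicator_of_mem hp]
      exact ne_of_gt (mul_pos hp.2 hp.1.2)
  have conc1 : ∀ᵐ p : (Fin m → ℝ) × (Fin n → ℝ),
      p ∈ Wε → 0 < hbar p → c p + uε p.1 + vε p.2 ≤ 0 := by
    filter_upwards [hcc', measure_eq_zero_iff_ae_notMem.mp hnull1] with p hcp hpA hW hb
    by_contra hgt
    push_neg at hgt
    exact hpA ⟨⟨hW, hb⟩, by rw [Set.mem_setOf_eq, ← hcp]; exact hgt⟩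
  -- second conclusion
  set A2 : Set ((Fin m → ℝ) × (Fin n → ℝ)) :=
    ((tsupport hbar \ Wε) ∩ {p | 0 < hbar p})
      ∩ {p | c' p + uε p.1 + vε p.2 < 0} with hA2
  have hA2m : MeasurableSet A2 :=
    (((isClosed_tsupport hbar).measurableSet.diff Wε_meas).inter
      (measurableSet_lt measurable_const hbar_meas)).inter
      (measurableSet_lt φ'meas measurable_const)
  obtain ⟨iG2, hG2⟩ := key (Wε ∪ A2) (Wε_meas.union hA2m)
  have hk2 : ∀ p, (Wε ∪ A2).indicator hbar p - hε p = A2.indicator hbar p := by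
    intro p; rw [hε_def]
    by_cases hpA : p ∈ A2
    · have hpW : p ∉ Wε := hpA.1.1.2
      simp [Set.indicator_apply, Set.mem_union, hpA, hpW]
    · by_cases hpW : p ∈ Wε <;>
        simp [Set.indicator_apply, Set.mem_union, hpA, hpW]
  have hnull2 : volume A2 = 0 := by
    refine nullOf A2
      (A2.indicator (fun p => -((c' p + uε p.1 + vε p.2) * hbar p)))
      (fun p => -((c p + uε p.1 + vε p.2) * ((Wε ∪ A2).indicator hbar p - hε p)))
      ?_ ?_ iG2.neg ?_ ?_
    · intro p
      by_cases hpA : p ∈ A2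
      · rw [Set.indicator_of_mem hpA]
        have h1 : c' p + uε p.1 + vε p.2 < 0 := hpA.2
        have h2 := hbar_nonneg p
        nlinarith
      · simp [Set.indicator_of_notMem hpA]
    · filter_upwards [hcc'] with p hcp
      rw [hk2 p]
      by_cases hpA : p ∈ A2
      · rw [Set.indicator_of_mem hpA, Set.indicator_of_mem hpA, hcp]
      · rw [Set.indicator_of_notMem hpA, Set.indicator_of_notMem hpA]; ring
    · rw [integral_neg]; linarith [hG2]
    · intro p hp
      rw [Set.indicator_of_mem hp]
      exact ne_of_gt (neg_pos.2 (mul_neg_of_neg_of_pos hp.2 hp.1.2))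
  have conc2 : ∀ᵐ p : (Fin m → ℝ) × (Fin n → ℝ),
      p ∈ tsupport hbar \ Wε → 0 < hbar p → 0 ≤ c p + uε p.1 + vε p.2 := by
    filter_upwards [hcc', measure_eq_zero_iff_ae_notMem.mp hnull2] with p hcp hpA hKW hb
    by_contra hlt
    push_neg at hlt
    exact hpA ⟨⟨hKW, hb⟩, by rw [Set.mem_setOf_eq, ← hcp]; exact hlt⟩
  exact ⟨conc1, conc2⟩
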